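/- Let ε ∈ (0,1) and set r = ⌈log₂(4/ε)⌉. Let B be a nonempty finite set, let w : B → [0,∞) satisfy Σ_{b ∈ B} w(b) = 1, and let e : B → [0,1] satisfy Σ_{b ∈ B} w(b)·e(b) ≥ ε/2. Then there exists k ∈ {1,…,2r} such that Σ_{b ∈ B : 2^{−k} < e(b) ≤ 2^{−k+1}} w(b) ≥ 2^k · ε / (16 r). -/
import Mathlib


open scoped Classical in
/-- (Dyadic pigeonhole.) Let `ε ∈ (0,1)`, `r = ⌈log₂(4/ε)⌉`. If `w` is
a probability weighting of a nonempty finite set `B` and `e : B → [0,1]` has weighted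
average at least `ε/2`, then some dyadic level `k ∈ {1,…,2r}` satisfies
`Σ_{b : 2^{−k} < e(b) ≤ 2^{−k+1}} w(b) ≥ 2^k · ε / (16 r)`. -/
theorem stmt11 {α : Type*} (ε : ℝ) (hε0 : 0 < ε) (hε1 : ε < 1)
    (B : Finset α) (hB : B.Nonempty)
    (w e : α → ℝ)
    (hw0 : ∀ b ∈ B, 0 ≤ w b) (hw1 : ∑ b ∈ B, w b = 1)
    (he : ∀ b ∈ B, 0 ≤ e b ∧ e b ≤ 1)
    (havg : ε / 2 ≤ ∑ b ∈ B, w b * e b) :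
    ∃ k : ℕ, 1 ≤ k ∧ k ≤ 2 * ⌈Real.logb 2 (4 / ε)⌉₊ ∧
      2 ^ k * ε / (16 * (⌈Real.logb 2 (4 / ε)⌉₊ : ℝ)) ≤
        ∑ b ∈ B.filter
          (fun b => (2 : ℝ) ^ (-(k : ℤ)) < e b ∧ e b ≤ (2 : ℝ) ^ (-(k : ℤ) + 1)), w b := by
  set r := ⌈Real.logb 2 (4 / ε)⌉₊ with hrdef
  have hε4 : (1:ℝ) < 4 / ε := by rw [lt_div_iff₀ hε0]; linarith
  have hlog : 0 < Real.logb 2 (4 / ε) := Real.logb_pos one_lt_two hε4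
  have hr1 : 1 ≤ r := Nat.one_le_ceil_iff.mpr hlog
  have hrR : (0:ℝ) < (r:ℝ) := by exact_mod_cast Nat.cast_pos.mpr hr1
  have h2r : 4 / ε ≤ 2 ^ r := by
    have h1 : Real.logb 2 (4 / ε) ≤ (r : ℝ) := Nat.le_ceil _
    calc 4 / ε = (2:ℝ) ^ Real.logb 2 (4 / ε) :=
          (Real.rpow_logb two_pos (by norm_num) (by positivity)).symm
      _ ≤ (2:ℝ) ^ (r : ℝ) := Real.rpow_le_rpow_of_exponent_le one_le_two h1
      _ = 2 ^ r := by rw [Real.rpow_natCast]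
  have hεr : (2:ℝ) ^ (-(r:ℤ)) ≤ ε / 4 := by
    rw [zpow_neg, zpow_natCast, show ε/4 = (4/ε)⁻¹ by field_simp]
    exact inv_anti₀ (by positivity) h2r
  have h2rr : (2:ℝ) ^ (-((2*r:ℕ):ℤ)) ≤ ε / 4 := by
    refine le_trans ?_ hεr
    apply zpow_le_zpow_right₀ one_le_two
    push_cast; omega
  by_contra hcon
  push_neg at hcon
  set band : ℕ → Finset α := fun k => B.filter
      (fun b => (2 : ℝ) ^ (-(k : ℤ)) < e b ∧ e b ≤ (2 : ℝ) ^ (-(k : ℤ) + 1)) with hband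
  set S := B.filter (fun b => (2:ℝ) ^ (-((2*r:ℕ):ℤ)) < e b) with hS
  -- Step A: ε/4 ≤ Σ_{b∈S} w b * e b
  have hA : ε / 4 ≤ ∑ b ∈ S, w b * e b := by
    have hsplit := Finset.sum_filter_add_sum_filter_not B
        (fun b => (2:ℝ) ^ (-((2*r:ℕ):ℤ)) < e b) (fun b => w b * e b)
    have hsmall : ∑ b ∈ B.filter (fun b => ¬ (2:ℝ) ^ (-((2*r:ℕ):ℤ)) < e b), w b * e b
        ≤ ε / 4 := by
      calc ∑ b ∈ B.filter (fun b => ¬ (2:ℝ) ^ (-((2*r:ℕ):ℤ)) < e b), w b * e b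
          ≤ ∑ b ∈ B.filter (fun b => ¬ (2:ℝ) ^ (-((2*r:ℕ):ℤ)) < e b), w b * (ε/4) := by
            apply Finset.sum_le_sum
            intro b hb
            have hbB := Finset.mem_filter.mp hb
            have := not_lt.mp hbB.2
            exact mul_le_mul_of_nonneg_left (this.trans h2rr) (hw0 b hbB.1)
        _ = (∑ b ∈ B.filter (fun b => ¬ (2:ℝ) ^ (-((2*r:ℕ):ℤ)) < e b), w b) * (ε/4) := by
            rw [Finset.sum_mul]
        _ ≤ 1 * (ε/4) := by
            apply mul_le_mul_of_nonneg_right _ (by positivity)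
            rw [← hw1]
            exact Finset.sum_le_sum_of_subset_of_nonneg (Finset.filter_subset _ _)
              (fun b hb _ => hw0 b hb)
        _ = ε/4 := one_mul _
    linarith
  -- Step B: Σ_S ≤ Σ_{k ∈ Icc 1 (2r)} Σ_{band k}
  have hsub : S ⊆ (Finset.Icc 1 (2*r)).biUnion band := by
    intro b hb
    obtain ⟨hbB, hbe⟩ := Finset.mem_filter.mp hb
    have he0 := (he b hbB).1
    have he1 := (he b hbB).2
    have hex : ∃ k : ℕ, (2:ℝ) ^ (-(k:ℤ)) < e b := ⟨2*r, hbe⟩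
    set k := Nat.find hex with hk
    have hkspec : (2:ℝ) ^ (-(k:ℤ)) < e b := Nat.find_spec hex
    have hkle : k ≤ 2*r := Nat.find_le hbe
    have hk1 : 1 ≤ k := by
      rcases Nat.eq_zero_or_pos k with h0 | h; swap; · exact h
      exfalso
      rw [h0] at hkspec
      simp at hkspec; linarith
    have hkub : e b ≤ (2:ℝ) ^ (-(k:ℤ) + 1) := by
      have hmin : ¬ (2:ℝ) ^ (-((k-1:ℕ):ℤ)) < e b := Nat.find_min hex (by omega)
      have hcast : (-((k-1:ℕ):ℤ)) = -(k:ℤ) + 1 := by push_cast [Nat.cast_sub hk1]; ring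
      rw [hcast] at hmin
      exact not_lt.mp hmin
    refine Finset.mem_biUnion.mpr ⟨k, Finset.mem_Icc.mpr ⟨hk1, hkle⟩, ?_⟩
    exact Finset.mem_filter.mpr ⟨hbB, hkspec, hkub⟩
  have hdisj : ((Finset.Icc 1 (2*r) : Finset ℕ) : Set ℕ).PairwiseDisjoint band := by
    intro k _ l _ hkl
    apply Finset.disjoint_left.mpr
    intro b hbk hbl
    obtain ⟨_, hk1, hk2⟩ := Finset.mem_filter.mp hbk
    obtain ⟨_, hl1, hl2⟩ := Finset.mem_filter.mp hbl
    rcases lt_or_gt_of_ne hkl with h | h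
    · have : (2:ℝ) ^ (-(l:ℤ) + 1) ≤ (2:ℝ) ^ (-(k:ℤ)) := by
        apply zpow_le_zpow_right₀ one_le_two; omega
      linarith
    · have : (2:ℝ) ^ (-(k:ℤ) + 1) ≤ (2:ℝ) ^ (-(l:ℤ)) := by
        apply zpow_le_zpow_right₀ one_le_two; omega
      linarith
  have hB2 : ∑ b ∈ S, w b * e b ≤ ∑ k ∈ Finset.Icc 1 (2*r), ∑ b ∈ band k, w b * e b := by
    rw [← Finset.sum_biUnion hdisj]
    apply Finset.sum_le_sum_of_subset_of_nonneg hsub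
    intro b hb _
    have hbB : b ∈ B := by
      obtain ⟨k, _, hbk⟩ := Finset.mem_biUnion.mp hb
      exact (Finset.mem_filter.mp hbk).1
    exact mul_nonneg (hw0 b hbB) (he b hbB).1
  -- Step C: each band sum small
  have hC : ∀ k ∈ Finset.Icc 1 (2*r), ∑ b ∈ band k, w b * e b < ε / (8*r) := by
    intro k hk
    obtain ⟨hk1, hk2⟩ := Finset.mem_Icc.mp hk
    have hWk := hcon k hk1 hk2
    calc ∑ b ∈ band k, w b * e b
        ≤ ∑ b ∈ band k, w b * (2:ℝ) ^ (-(k:ℤ)+1) := by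
          apply Finset.sum_le_sum
          intro b hb
          obtain ⟨hbB, _, hub⟩ := Finset.mem_filter.mp hb
          exact mul_le_mul_of_nonneg_left hub (hw0 b hbB)
      _ = (∑ b ∈ band k, w b) * (2:ℝ) ^ (-(k:ℤ)+1) := by rw [Finset.sum_mul]
      _ < (2 ^ k * ε / (16 * r)) * (2:ℝ) ^ (-(k:ℤ)+1) := by
          apply mul_lt_mul_of_pos_right hWk (by positivity)
      _ = ε / (8*r) := by
          have : (2:ℝ) ^ (-(k:ℤ)+1) = 2 / 2^k := by
            rw [zpow_add₀ (two_ne_zero), zpow_neg, zpow_natCast, zpow_one]; ring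
          rw [this]
          field_simp
          ring
  have hfinal : ∑ k ∈ Finset.Icc 1 (2*r), ∑ b ∈ band k, w b * e b < ε / 4 := by
    calc ∑ k ∈ Finset.Icc 1 (2*r), ∑ b ∈ band k, w b * e b
        < ∑ k ∈ Finset.Icc 1 (2*r), ε / (8*r) := by
          apply Finset.sum_lt_sum_of_nonempty _ hC
          exact ⟨1, Finset.mem_Icc.mpr ⟨le_refl 1, by omega⟩⟩
      _ = (2*r : ℕ) * (ε / (8*r)) := by
          rw [Finset.sum_const, Nat.card_Icc]
          simp [nsmul_eq_mul]
      _ = ε / 4 := by push_cast; field_simp; ring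
  linarith
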